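/- Let P be the 3rd order, 3-dimensional stochastic tensor with frontal slices P(:,:,1) = [[1/2,1/3,1/2],[1/2,1/2,0],[0,1/3,1/2]], P(:,:,2) = [[1,0,1/2],[0,1,1/2],[0,0,0]], P(:,:,3) = [[0,0,1/2],[0,0,1/2],[1,1,0]]. Then: (a) states 1 and 3 communicate (1 ↔ 3); (b) f_{3 3 1} = f_{3 3 2} = f_{3 3 3} = 1, so state 3 is recurrent; and (c) f_{1 1 1} = 5/6 < 1 while f_{1 1 3} = 1, so state 1 is transient but not fully transient. Hence, for higher order Markov chains, recurrence and transience are not class properties of the communication relation. -/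

import Mathlib

open Finset

/-- A 3rd order, `n`-dimensional tensor: entry `p_{i₁ i₂ i₃}` is `P i₁ i₂ i₃`. -/
abbrev Tensor3 (n : ℕ) := Fin n → Fin n → Fin n → ℝ

/-- The product `A ⊠ B`: `(A ⊠ B)_{i₁ i₂ i₃} = Σ_j a_{i₁ j i₂} b_{j i₂ i₃}`. -/
def tmul3 {n : ℕ} (A B : Tensor3 n) : Tensor3 n :=
  fun i₁ i₂ i₃ => ∑ j : Fin n, A i₁ j i₂ * B j i₂ i₃

/-- Tensor powers: `tpow3 P k` is `P^k`, with entries the `k`-step transition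
probabilities `p^{(k)}_{i₁ i₂ i₃}`; `P^0` is the identity tensor. -/
def tpow3 {n : ℕ} (P : Tensor3 n) : ℕ → Tensor3 n
  | 0 => fun i₁ i₂ _ => if i₁ = i₂ then 1 else 0
  | k + 1 => tmul3 (tpow3 P k) P

/-- `fpp3 P k` is the `(k+1)`-step first passage probability tensor `F^{[k+1]}`:
`f^{[1]} = p` and `f^{[k+1]}_{i₁ i₂ i₃} = Σ_{j ≠ i₁} f^{[k]}_{i₁ j i₂} p_{j i₂ i₃}`. -/
def fpp3 {n : ℕ} (P : Tensor3 n) : ℕ → Tensor3 n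
  | 0 => P
  | k + 1 => fun i₁ i₂ i₃ =>
      ∑ j ∈ Finset.univ.filter (fun j => j ≠ i₁), fpp3 P k i₁ j i₂ * P j i₂ i₃

/-- The ever-reaching probability `f_{i₁ i₂ i₃} = Σ_{k=1}^∞ f^{[k]}_{i₁ i₂ i₃}`. -/
noncomputable def everReach3 {n : ℕ} (P : Tensor3 n) : Tensor3 n :=
  fun i₁ i₂ i₃ => ∑' k : ℕ, fpp3 P k i₁ i₂ i₃

/-- State `j` is reachable from state `i` (`i → j`): for every `i₃` there is
`k ≥ 0` with `p^{(k)}_{j i i₃} > 0`. -/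
def Reach3 {n : ℕ} (P : Tensor3 n) (i j : Fin n) : Prop :=
  ∀ i₃ : Fin n, ∃ k : ℕ, 0 < tpow3 P k j i i₃

/-- The chain is irreducible: for every nonempty proper `K ⊊ S` there are
`i₁ ∈ K` and `i₂, i₃ ∉ K` with `p_{i₁ i₂ i₃} > 0`. -/
def Irreducible3 {n : ℕ} (P : Tensor3 n) : Prop :=
  ∀ K : Set (Fin n), K.Nonempty → K ≠ Set.univ →
    ∃ i₁ ∈ K, ∃ i₂, i₂ ∉ K ∧ ∃ i₃, i₃ ∉ K ∧ 0 < P i₁ i₂ i₃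

/-- The chain is ergodic: for all `i₁ i₂ i₃` there is `k ≥ 1` with `p^{(k)}_{i₁ i₂ i₃} > 0`. -/
def Ergodic3 {n : ℕ} (P : Tensor3 n) : Prop :=
  ∀ i₁ i₂ i₃ : Fin n, ∃ k : ℕ, 1 ≤ k ∧ 0 < tpow3 P k i₁ i₂ i₃

/-- The reduced transition matrix `Q` of a second order chain: rows and columns
are indexed by pairs, `Q (i₁,i₂) (j₁,j₂) = p_{i₁ i₂ j₂}` if `j₁ = i₂`, else `0`. -/
def reduced3 {n : ℕ} (P : Tensor3 n) : Matrix (Fin n × Fin n) (Fin n × Fin n) ℝ :=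
  fun u v => if v.1 = u.2 then P u.1 u.2 v.2 else 0

/-- The transition tensor of Statement 15 (states `1,2,3` are `0,1,2 : Fin 3`). -/
noncomputable def P15 : Tensor3 3 := fun i₁ i₂ i₃ =>
  ![!![(1/2:ℝ), 1/3, 1/2; 1/2, 1/2, 0; 0, 1/3, 1/2],
    !![1, 0, 1/2; 0, 1, 1/2; 0, 0, 0],
    !![0, 0, 1/2; 0, 0, 1/2; 1, 1, 0]] i₃ i₁ i₂

lemma hfilt0 : Finset.univ.filter (fun j => j ≠ (0:Fin 3)) = {1,2} := by decide
lemma hfilt2 : Finset.univ.filter (fun j => j ≠ (2:Fin 3)) = {0,1} := by decide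

lemma fpp_succ0 (P : Tensor3 3) (k : ℕ) (a b : Fin 3) :
    fpp3 P (k+1) 0 a b = fpp3 P k 0 1 a * P 1 a b + fpp3 P k 0 2 a * P 2 a b := by
  show ∑ j ∈ Finset.univ.filter (fun j => j ≠ 0), fpp3 P k 0 j a * P j a b = _
  rw [hfilt0, Finset.sum_insert (by decide), Finset.sum_singleton]

lemma fpp_succ2 (P : Tensor3 3) (k : ℕ) (a b : Fin 3) :
    fpp3 P (k+1) 2 a b = fpp3 P k 2 0 a * P 0 a b + fpp3 P k 2 1 a * P 1 a b := by
  show ∑ j ∈ Finset.univ.filter (fun j => j ≠ 2), fpp3 P k 2 j a * P j a b = _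
  rw [hfilt2, Finset.sum_insert (by decide), Finset.sum_singleton]

noncomputable def Etab : Fin 3 → Fin 3 → ℝ := fun a b =>
  !![(1/12:ℝ),0,1/4; 0,0,0; 0,1/4,1/4] a b
noncomputable def Otab : Fin 3 → Fin 3 → ℝ := fun a b =>
  !![(0:ℝ),0,0; 1/12,0,1/4; 1/8,0,0] a b

lemma key (m : ℕ) :
    (∀ a b, fpp3 P15 (2*m+2) 0 a b = (1/2:ℝ)^m * Etab a b) ∧
    (∀ a b, fpp3 P15 (2*m+3) 0 a b = (1/2:ℝ)^m * Otab a b) := by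
  induction m with
  | zero =>
    have f1 : ∀ a b, fpp3 P15 1 0 a b = !![(1/6:ℝ),0,1/2; 1/6,0,1/2; 1/4,0,0] a b := by
      intro a b
      rw [show fpp3 P15 1 0 a b = fpp3 P15 (0+1) 0 a b from rfl, fpp_succ0]
      fin_cases a <;> fin_cases b <;>
        (simp [fpp3, P15, Matrix.vecHead, Matrix.vecTail] <;> norm_num [fpp3, P15, Matrix.vecHead, Matrix.vecTail])
    have f2 : ∀ a b, fpp3 P15 2 0 a b = Etab a b := by
      intro a b
      rw [show fpp3 P15 2 0 a b = fpp3 P15 (1+1) 0 a b from rfl, fpp_succ0, f1, f1]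
      fin_cases a <;> fin_cases b <;>
        (simp [P15, Etab, Matrix.vecHead, Matrix.vecTail] <;> norm_num [P15, Etab, Matrix.vecHead, Matrix.vecTail])
    have f3 : ∀ a b, fpp3 P15 3 0 a b = Otab a b := by
      intro a b
      rw [show fpp3 P15 3 0 a b = fpp3 P15 (2+1) 0 a b from rfl, fpp_succ0, f2, f2]
      fin_cases a <;> fin_cases b <;>
        (simp [P15, Etab, Otab, Matrix.vecHead, Matrix.vecTail] <;> norm_num [P15, Etab, Otab, Matrix.vecHead, Matrix.vecTail])
    exact ⟨fun a b => by rw [show 2*0+2 = 2 from rfl, f2]; norm_num,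
           fun a b => by rw [show 2*0+3 = 3 from rfl, f3]; norm_num⟩
  | succ m ih =>
    obtain ⟨hE, hO⟩ := ih
    have hE' : ∀ a b, fpp3 P15 (2*(m+1)+2) 0 a b = (1/2:ℝ)^(m+1) * Etab a b := by
      intro a b
      have h : 2*(m+1)+2 = (2*m+3)+1 := by ring
      rw [h, fpp_succ0, hO, hO]
      fin_cases a <;> fin_cases b <;>
        · (simp [P15, Otab, Etab, Matrix.vecHead, Matrix.vecTail, pow_succ] <;> norm_num [P15, Otab, Etab, Matrix.vecHead, Matrix.vecTail, pow_succ])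
          try ring
    refine ⟨hE', fun a b => ?_⟩
    have h : 2*(m+1)+3 = (2*(m+1)+2)+1 := by ring
    rw [h, fpp_succ0, hE', hE']
    fin_cases a <;> fin_cases b <;>
      · (simp [P15, Otab, Etab, Matrix.vecHead, Matrix.vecTail, pow_succ] <;> norm_num [P15, Otab, Etab, Matrix.vecHead, Matrix.vecTail, pow_succ])
        try ring

lemma tsum_calc (c0 c1 cE : ℝ) (f : ℕ → ℝ) (h0 : f 0 = c0) (h1 : f 1 = c1)
    (hE : ∀ m, f (2*m+2) = (1/2:ℝ)^m * cE) (hO : ∀ m, f (2*m+3) = 0) :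
    ∑' k, f k = c0 + c1 + 2*cE := by
  have hse : Summable (fun m => f (2*m+2)) := by
    simp only [hE]
    exact (summable_geometric_of_lt_one (by norm_num) (by norm_num)).mul_right _
  have hso : Summable (fun m => f (2*m+3)) := by
    simp only [hO]; exact summable_zero
  have hs2 : Summable (fun k => f (k+2)) :=
    Summable.even_add_odd (f := fun k => f (k+2)) hse hso
  have hs0 : Summable f := (summable_nat_add_iff 2).mp hs2
  have hs1 : Summable (fun k => f (k+1)) := (summable_nat_add_iff 1).mpr hs0
  rw [Summable.tsum_eq_zero_add hs0, Summable.tsum_eq_zero_add hs1, h0, h1]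
  have heo : ∑' k, f (k+2) = ∑' m, f (2*m+2) + ∑' m, f (2*m+3) :=
    (tsum_even_add_odd (f := fun k => f (k+2)) hse hso).symm
  rw [heo]
  simp only [hE, hO]
  rw [tsum_zero, tsum_mul_right, tsum_geometric_of_lt_one (by norm_num) (by norm_num)]
  norm_num; ring

/-- (a) states `1` and `3` communicate; (b) `f_{3 3 i₃} = 1` for
all `i₃`, so state `3` is recurrent; (c) `f_{111} = 5/6 < 1` while `f_{113} = 1`,
so state `1` is transient but not fully transient. -/
theorem recurrence_not_class_property :
    (Reach3 P15 0 2 ∧ Reach3 P15 2 0) ∧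
    (∀ i₃ : Fin 3, everReach3 P15 2 2 i₃ = 1) ∧
    everReach3 P15 0 0 0 = 5 / 6 ∧
    everReach3 P15 0 0 0 < 1 ∧
    everReach3 P15 0 0 2 = 1 := by
  have h000 := tsum_calc (1/2) (1/6) (1/12) (fun k => fpp3 P15 k 0 0 0)
    (by (simp [fpp3, P15] <;> norm_num [fpp3, P15]))
    (by show fpp3 P15 1 0 0 0 = 1/6
        rw [fpp_succ0]; (simp [fpp3, P15, Matrix.vecHead, Matrix.vecTail] <;> norm_num [fpp3, P15, Matrix.vecHead, Matrix.vecTail]))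
    (fun m => by show fpp3 P15 (2*m+2) 0 0 0 = _; rw [(key m).1]; (simp [Etab] <;> norm_num [Etab]))
    (fun m => by show fpp3 P15 (2*m+3) 0 0 0 = _; rw [(key m).2]
                 (simp [Otab, Matrix.vecHead, Matrix.vecTail] <;> norm_num [Otab, Matrix.vecHead, Matrix.vecTail]))
  have h002 := tsum_calc 0 (1/2) (1/4) (fun k => fpp3 P15 k 0 0 2)
    (by (simp [fpp3, P15] <;> norm_num [fpp3, P15]))
    (by show fpp3 P15 1 0 0 2 = 1/2
        rw [fpp_succ0]; (simp [fpp3, P15, Matrix.vecHead, Matrix.vecTail] <;> norm_num [fpp3, P15, Matrix.vecHead, Matrix.vecTail]))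
    (fun m => by show fpp3 P15 (2*m+2) 0 0 2 = _; rw [(key m).1]
                 (simp [Etab, Matrix.vecHead, Matrix.vecTail] <;> norm_num [Etab, Matrix.vecHead, Matrix.vecTail]))
    (fun m => by show fpp3 P15 (2*m+3) 0 0 2 = _; rw [(key m).2]
                 (simp [Otab, Matrix.vecHead, Matrix.vecTail] <;> norm_num [Otab, Matrix.vecHead, Matrix.vecTail]))
  have hz : ∀ k, fpp3 P15 (k+1) 2 0 2 = 0 ∧ fpp3 P15 (k+1) 2 1 2 = 0 := by
    intro k
    constructor <;>
      · rw [fpp_succ2]; (simp [P15, Matrix.vecHead, Matrix.vecTail] <;> norm_num [P15, Matrix.vecHead, Matrix.vecTail])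
  have hz2 : ∀ k (i₃ : Fin 3), fpp3 P15 (k+2) 2 2 i₃ = 0 := by
    intro k i₃
    rw [show k+2 = (k+1)+1 from rfl, fpp_succ2, (hz k).1, (hz k).2]
    ring
  have h22 : ∀ i₃ : Fin 3, everReach3 P15 2 2 i₃ = 1 := by
    intro i₃
    show ∑' k, fpp3 P15 k 2 2 i₃ = 1
    rw [tsum_eq_sum (s := ({0,1} : Finset ℕ)) (by
      intro b hb
      simp only [Finset.mem_insert, Finset.mem_singleton] at hb
      push_neg at hb
      obtain ⟨m, rfl⟩ : ∃ m, b = m + 2 := ⟨b - 2, by omega⟩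
      exact hz2 m i₃)]
    rw [Finset.sum_insert (by norm_num), Finset.sum_singleton]
    rw [show (1:ℕ) = 0 + 1 from rfl, fpp_succ2]
    fin_cases i₃ <;>
      (simp [fpp3, P15, Matrix.vecHead, Matrix.vecTail] <;> norm_num [fpp3, P15, Matrix.vecHead, Matrix.vecTail])
  refine ⟨⟨?_, ?_⟩, h22, by rw [show everReach3 P15 0 0 0 = _ from h000]; norm_num,
    by rw [show everReach3 P15 0 0 0 = _ from h000]; norm_num,
    by rw [show everReach3 P15 0 0 2 = _ from h002]; norm_num⟩
  · intro i₃
    refine ⟨3, ?_⟩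
    fin_cases i₃ <;>
      (simp [tpow3, tmul3, Fin.sum_univ_three, P15, Matrix.vecHead, Matrix.vecTail] <;> norm_num [tpow3, tmul3, Fin.sum_univ_three, P15, Matrix.vecHead, Matrix.vecTail])
  · intro i₃
    refine ⟨1, ?_⟩
    fin_cases i₃ <;>
      (simp [tpow3, tmul3, Fin.sum_univ_three, P15, Matrix.vecHead, Matrix.vecTail] <;> norm_num [tpow3, tmul3, Fin.sum_univ_three, P15, Matrix.vecHead, Matrix.vecTail])
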